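/- Let σ₁, σ₂ be irreducible complex representations of GL(2,𝔽_q). If the restriction of the external tensor product σ₁ ⊠ σ₂ to the subgroup (GL(2,q)²)⁰ = {(a,b) | det a = det b} is reducible, then λ₀σ₁ ≅ σ₁ and λ₀σ₂ ≅ σ₂, where λ₀ is the unique nontrivial quadratic character of 𝔽_q^× (q odd) and λ₀σ denotes the twist (λ₀ ∘ det) ⊗ σ; in that case the restriction decomposes as a direct sum of two irreducible constituents of equal dimension. -/

import Mathlib

open Matrix TensorProduct

/-- The subgroup `(GL(2,q)²)⁰` of pairs with equal determinant. -/
def eqDetSubgroup (F : Type*) [Field F] [DecidableEq F] :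
    Subgroup (GL (Fin 2) F × GL (Fin 2) F) where
  carrier := {x | Matrix.GeneralLinearGroup.det x.1 = Matrix.GeneralLinearGroup.det x.2}
  one_mem' := rfl
  mul_mem' := by
    intro a b ha hb
    simp only [Set.mem_setOf_eq, Prod.fst_mul, Prod.snd_mul, _root_.map_mul] at *
    rw [ha, hb]
  inv_mem' := by
    intro a ha
    simp only [Set.mem_setOf_eq, Prod.fst_inv, Prod.snd_inv, _root_.map_inv] at *
    rw [ha]

/-- External tensor product of representations of two groups. -/
noncomputable def extProd {G₁ G₂ V₁ V₂ : Type*} [Group G₁] [Group G₂]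
    [AddCommGroup V₁] [Module ℂ V₁] [AddCommGroup V₂] [Module ℂ V₂]
    (σ₁ : Representation ℂ G₁ V₁) (σ₂ : Representation ℂ G₂ V₂) :
    Representation ℂ (G₁ × G₂) (V₁ ⊗[ℂ] V₂) where
  toFun g := TensorProduct.map (σ₁ g.1) (σ₂ g.2)
  map_one' := by simp [TensorProduct.map_one]
  map_mul' g h := by
    simp only [Prod.fst_mul, Prod.snd_mul, _root_.map_mul]
    exact TensorProduct.map_mul _ _ _ _

/-- A submodule invariant under a representation. -/
def IsSubrep {G V : Type*} [Group G] [AddCommGroup V] [Module ℂ V]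
    (ρ : Representation ℂ G V) (W : Submodule ℂ V) : Prop :=
  ∀ g : G, ∀ v ∈ W, ρ g v ∈ W

/-- Irreducibility of a representation: no nontrivial invariant subspace. -/
def IsIrreducibleRep {G V : Type*} [Group G] [AddCommGroup V] [Module ℂ V]
    (ρ : Representation ℂ G V) : Prop :=
  Nontrivial V ∧ ∀ W : Submodule ℂ V, IsSubrep ρ W → W = ⊥ ∨ W = ⊤

namespace Stmt4Aux

open Module LinearMap

section Generic

variable {G V : Type*} [Group G] [AddCommGroup V] [Module ℂ V]

lemma rep_comp_inv_cancel (ρ : Representation ℂ G V) (g : G) (v : V) :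
    ρ g (ρ g⁻¹ v) = v := by
  have h : ρ g * ρ g⁻¹ = 1 := by rw [← _root_.map_mul, mul_inv_cancel, _root_.map_one]
  calc ρ g (ρ g⁻¹ v) = (ρ g * ρ g⁻¹) v := rfl
  _ = v := by rw [h]; rfl

lemma rep_inj (ρ : Representation ℂ G V) (g : G) {v w : V} (h : ρ g v = ρ g w) : v = w := by
  have := congrArg (ρ g⁻¹) h
  rwa [← Module.End.mul_apply, ← Module.End.mul_apply, ← _root_.map_mul, inv_mul_cancel,
    _root_.map_one, Module.End.one_apply, Module.End.one_apply] at this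

lemma mem_of_span_apply (ρ : Representation ℂ G V) {U : Submodule ℂ V} (hU : IsSubrep ρ U)
    {f : V →ₗ[ℂ] V} (hf : f ∈ Submodule.span ℂ (Set.range fun g : G => (ρ g : V →ₗ[ℂ] V)))
    {v : V} (hv : v ∈ U) : f v ∈ U := by
  induction hf using Submodule.span_induction with
  | mem f hfm => obtain ⟨g, rfl⟩ := hfm; exact hU g v hv
  | zero => simpa using U.zero_mem
  | add f₁ f₂ _ _ h₁ h₂ => simpa using U.add_mem h₁ h₂
  | smul c f _ h => simpa using U.smul_mem c h

lemma schur_scalar [FiniteDimensional ℂ V] {ρ : Representation ℂ G V}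
    (hirr : IsIrreducibleRep ρ) {f : V →ₗ[ℂ] V}
    (hf : ∀ g : G, f ∘ₗ (ρ g : V →ₗ[ℂ] V) = (ρ g : V →ₗ[ℂ] V) ∘ₗ f) :
    ∃ c : ℂ, f = c • LinearMap.id := by
  haveI : Nontrivial V := hirr.1
  obtain ⟨c, hc⟩ := Module.End.exists_eigenvalue (f : Module.End ℂ V)
  obtain ⟨v₀, hv₀⟩ := hc.exists_hasEigenvector
  refine ⟨c, ?_⟩
  have hsub : IsSubrep ρ (Module.End.eigenspace (f : Module.End ℂ V) c) := by
    intro g v hv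
    rw [Module.End.mem_eigenspace_iff] at hv ⊢
    have h1 : f (ρ g v) = ρ g (f v) := congrArg (fun F : V →ₗ[ℂ] V => F v) (hf g)
    rw [h1, hv]; exact (ρ g).map_smul c v
  rcases hirr.2 _ hsub with h | h
  · exact absurd h hc
  · ext v
    have hv : v ∈ Module.End.eigenspace (f : Module.End ℂ V) c := h ▸ Submodule.mem_top
    rw [Module.End.mem_eigenspace_iff] at hv
    simpa using hv

lemma maschke [Fintype G] (ρ : Representation ℂ G V) {W : Submodule ℂ V}
    (hW : IsSubrep ρ W) :
    ∃ Q : V →ₗ[ℂ] V, (∀ g : G, Q ∘ₗ (ρ g : V →ₗ[ℂ] V) = (ρ g : V →ₗ[ℂ] V) ∘ₗ Q) ∧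
      (∀ w ∈ W, Q w = w) ∧ (∀ v, Q v ∈ W) := by
  classical
  obtain ⟨C, hC⟩ := Submodule.exists_isCompl W
  set p : V →ₗ[ℂ] V := W.subtype ∘ₗ W.projectionOnto C hC with hp
  have hpW : ∀ w ∈ W, p w = w := by
    intro w hw
    have := Submodule.linearProjOfIsCompl_apply_left hC ⟨w, hw⟩
    simp only [hp, LinearMap.comp_apply]
    rw [this]
    rfl
  have hpmem : ∀ v, p v ∈ W := fun v => (W.projectionOnto C hC v).2
  set N : ℂ := (Fintype.card G : ℂ) with hN
  have hNne : N ≠ 0 := Nat.cast_ne_zero.mpr Fintype.card_ne_zero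
  refine ⟨N⁻¹ • ∑ g : G, (ρ g : V →ₗ[ℂ] V) ∘ₗ p ∘ₗ (ρ g⁻¹ : V →ₗ[ℂ] V), ?_, ?_, ?_⟩
  · intro g₀
    ext v
    simp only [LinearMap.comp_apply, LinearMap.smul_apply, LinearMap.sum_apply]
    rw [_root_.map_smul, _root_.map_sum]
    congr 1
    refine Fintype.sum_equiv (Equiv.mulLeft g₀⁻¹) _ _ fun x => ?_
    simp only [Equiv.coe_mulLeft, LinearMap.comp_apply]
    have h1 : ρ g₀ (ρ (g₀⁻¹ * x) (p (ρ (g₀⁻¹ * x)⁻¹ v)))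
        = ρ x (p (ρ (g₀⁻¹ * x)⁻¹ v)) := by
      rw [← Module.End.mul_apply (ρ g₀), ← _root_.map_mul, mul_inv_cancel_left]
    have h2 : ρ (g₀⁻¹ * x)⁻¹ v = ρ x⁻¹ (ρ g₀ v) := by
      rw [_root_.mul_inv_rev, inv_inv, _root_.map_mul]; rfl
    rw [h1, h2]
  · intro w hw
    have hterm : ∀ g : G, (ρ g : V →ₗ[ℂ] V) (p ((ρ g⁻¹ : V →ₗ[ℂ] V) w)) = w := by
      intro g
      rw [hpW _ (hW g⁻¹ w hw), rep_comp_inv_cancel]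
    simp only [LinearMap.smul_apply, LinearMap.sum_apply, LinearMap.comp_apply, hterm]
    simp only [Finset.sum_const, Finset.card_univ]
    rw [← Nat.cast_smul_eq_nsmul ℂ, smul_smul, inv_mul_cancel₀ hNne, one_smul]
  · intro v
    simp only [LinearMap.smul_apply, LinearMap.sum_apply, LinearMap.comp_apply]
    refine W.smul_mem _ (Submodule.sum_mem _ fun g _ => hW g _ (hpmem _))


lemma comp_mem_span {ρ : Representation ℂ G V} {f : V →ₗ[ℂ] V}
    (hf : f ∈ Submodule.span ℂ (Set.range fun g : G => (ρ g : V →ₗ[ℂ] V))) (g₀ : G) :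
    (ρ g₀ : V →ₗ[ℂ] V) ∘ₗ f ∈ Submodule.span ℂ (Set.range fun g : G => (ρ g : V →ₗ[ℂ] V)) := by
  induction hf using Submodule.span_induction with
  | mem f hfm =>
      obtain ⟨g, rfl⟩ := hfm
      refine Submodule.subset_span ⟨g₀ * g, ?_⟩
      show (ρ (g₀ * g) : V →ₗ[ℂ] V) = ρ g₀ ∘ₗ ρ g
      rw [_root_.map_mul]; rfl
  | zero => simpa using Submodule.zero_mem _
  | add f₁ f₂ _ _ h₁ h₂ => simpa [LinearMap.comp_add] using Submodule.add_mem _ h₁ h₂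
  | smul c f _ h => simpa [LinearMap.comp_smul] using Submodule.smul_mem _ c h

lemma span_rep_eq_top [Fintype G] [FiniteDimensional ℂ V] {ρ : Representation ℂ G V}
    (hirr : IsIrreducibleRep ρ) :
    Submodule.span ℂ (Set.range fun g : G => (ρ g : V →ₗ[ℂ] V)) = ⊤ := by
  classical
  haveI : Nontrivial V := hirr.1
  set A := Submodule.span ℂ (Set.range fun g : G => (ρ g : V →ₗ[ℂ] V)) with hA
  rw [eq_top_iff]
  rintro f -
  set n := finrank ℂ V with hn
  set b : Basis (Fin n) ℂ V := finBasis ℂ V with hb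
  -- the diagonal representation on `Fin n → V`
  set ρbar : Representation ℂ G (Fin n → V) :=
    { toFun := fun g => (ρ g : V →ₗ[ℂ] V).compLeft (Fin n)
      map_one' := by
        apply LinearMap.ext; intro v; funext i
        simp [LinearMap.compLeft]
      map_mul' := fun g h => by
        apply LinearMap.ext; intro v; funext i
        simp [LinearMap.compLeft, _root_.map_mul]; rfl } with hρbar
  have hρbar_apply : ∀ (g : G) (x : Fin n → V) (i : Fin n), ρbar g x i = ρ g (x i) := by
    intro g x i; rfl
  -- the evaluation map
  set ev : (V →ₗ[ℂ] V) →ₗ[ℂ] (Fin n → V) :=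
    LinearMap.pi (fun i => LinearMap.applyₗ (b i) ∘ₗ LinearMap.id) with hev
  have hev_apply : ∀ (f : V →ₗ[ℂ] V) (i : Fin n), ev f i = f (b i) := fun f i => rfl
  set NN : Submodule ℂ (Fin n → V) := A.map ev with hNN
  have hNsub : IsSubrep ρbar NN := by
    rintro g _ ⟨f, hf, rfl⟩
    refine ⟨(ρ g : V →ₗ[ℂ] V) ∘ₗ f, comp_mem_span hf g, ?_⟩
    funext i; rfl
  obtain ⟨Q, hQcomm, hQfix, hQmem⟩ := maschke ρbar hNsub
  -- matrix entries of Q are scalars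
  have hentry : ∀ i j : Fin n, ∃ c : ℂ,
      (LinearMap.proj i : (Fin n → V) →ₗ[ℂ] V) ∘ₗ Q ∘ₗ
        (LinearMap.single ℂ (fun _ : Fin n => V) j) = c • LinearMap.id := by
    intro i j
    apply schur_scalar hirr
    intro g
    apply LinearMap.ext; intro v
    simp only [LinearMap.comp_apply, LinearMap.proj_apply, LinearMap.single_apply]
    have hsingle : Pi.single j (ρ g v) = ρbar g (Pi.single j v) := by
      funext i'
      rcases eq_or_ne i' j with rfl | hne
      · simp [hρbar_apply]
      · simp [Pi.single_eq_of_ne hne, hρbar_apply]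
    rw [hsingle, ← LinearMap.comp_apply Q, hQcomm g]
    rfl
  choose c hc using hentry
  -- `Q` fixes `ev id`
  have hid : ev LinearMap.id ∈ NN := ⟨LinearMap.id, by
      refine Submodule.subset_span ⟨1, ?_⟩
      show (ρ 1 : V →ₗ[ℂ] V) = LinearMap.id
      rw [_root_.map_one]; rfl, rfl⟩
  have hQid : Q (ev LinearMap.id) = ev LinearMap.id := hQfix _ hid
  have hcomp : ∀ (x : Fin n → V) (i : Fin n), Q x i = ∑ j, c i j • x j := by
    intro x i
    have hx : x = ∑ j, Pi.single j (x j) := by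
      rw [Finset.univ_sum_single]
    calc Q x i = Q (∑ j, Pi.single j (x j)) i := by rw [← hx]
    _ = ∑ j, Q (Pi.single j (x j)) i := by rw [_root_.map_sum]; simp
    _ = ∑ j, c i j • (x j) := by
        refine Finset.sum_congr rfl fun j _ => ?_
        have := congrArg (fun F : V →ₗ[ℂ] V => F (x j)) (hc i j)
        simpa using this
  have hbase : ∀ i, ∑ j, c i j • b j = b i := by
    intro i
    have := congrFun hQid i
    rwa [hcomp] at this
  -- `Q` fixes `ev f`
  have hQf : Q (ev f) = ev f := by
    funext i
    rw [hcomp]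
    simp only [hev_apply]
    calc ∑ j, c i j • f (b j) = f (∑ j, c i j • b j) := by
          rw [_root_.map_sum]; simp
    _ = f (b i) := by rw [hbase]
  have : ev f ∈ NN := by rw [← hQf]; exact hQmem _
  obtain ⟨f', hf', hff'⟩ := this
  have : f' = f := by
    apply b.ext
    intro i
    have := congrFun hff' i
    simpa [hev_apply] using this
  rwa [← this]

end Generic

section Contract

variable {V₁ V₂ : Type*} [AddCommGroup V₁] [Module ℂ V₁] [AddCommGroup V₂] [Module ℂ V₂]

/-- Contraction with a dual vector on the right factor. -/
noncomputable def cR (φ : Module.Dual ℂ V₂) : V₁ ⊗[ℂ] V₂ →ₗ[ℂ] V₁ :=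
  (TensorProduct.rid ℂ V₁).toLinearMap ∘ₗ LinearMap.lTensor V₁ φ

@[simp] lemma cR_tmul (φ : Module.Dual ℂ V₂) (v : V₁) (w : V₂) :
    cR φ (v ⊗ₜ[ℂ] w) = φ w • v := by
  simp [cR]

/-- Contraction with a dual vector on the left factor. -/
noncomputable def cL (φ : Module.Dual ℂ V₁) : V₁ ⊗[ℂ] V₂ →ₗ[ℂ] V₂ :=
  (TensorProduct.lid ℂ V₂).toLinearMap ∘ₗ LinearMap.rTensor V₂ φ

@[simp] lemma cL_tmul (φ : Module.Dual ℂ V₁) (v : V₁) (w : V₂) :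
    cL φ (v ⊗ₜ[ℂ] w) = φ v • w := by
  simp [cL]

lemma cR_map (φ : Module.Dual ℂ V₂) (f : V₁ →ₗ[ℂ] V₁) :
    cR φ ∘ₗ TensorProduct.map f LinearMap.id = f ∘ₗ (cR φ : V₁ ⊗[ℂ] V₂ →ₗ[ℂ] V₁) := by
  apply TensorProduct.ext'
  intro v w
  simp

lemma cL_map (φ : Module.Dual ℂ V₁) (f : V₂ →ₗ[ℂ] V₂) :
    cL φ ∘ₗ TensorProduct.map LinearMap.id f = f ∘ₗ (cL φ : V₁ ⊗[ℂ] V₂ →ₗ[ℂ] V₂) := by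
  apply TensorProduct.ext'
  intro v w
  simp

lemma exists_cR_ne {t : V₁ ⊗[ℂ] V₂} (ht : t ≠ 0) :
    ∃ φ : Module.Dual ℂ V₂, cR (V₁ := V₁) φ t ≠ 0 := by
  by_contra hcon
  push_neg at hcon
  apply ht
  classical
  set b := Basis.ofVectorSpace ℂ V₂ with hb
  set E := TensorProduct.congr (LinearEquiv.refl ℂ V₁) b.repr with hE
  set E' := TensorProduct.finsuppScalarRight ℂ ℂ V₁ (Basis.ofVectorSpaceIndex ℂ V₂) with hE'
  have key : ∀ j, (Finsupp.lapply j : (_ →₀ V₁) →ₗ[ℂ] V₁) ∘ₗ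
      (E'.toLinearMap ∘ₗ E.toLinearMap) = cR (b.coord j) := by
    intro j
    apply TensorProduct.ext'
    intro v w
    simp only [LinearMap.comp_apply, LinearEquiv.coe_coe, hE, TensorProduct.congr_tmul,
      LinearEquiv.refl_apply, hE', Finsupp.lapply_apply,
      TensorProduct.finsuppScalarRight_apply_tmul_apply, cR_tmul, Basis.coord_apply]
  have hz : E' (E t) = 0 := by
    ext j
    have := congrArg (fun F : V₁ ⊗[ℂ] V₂ →ₗ[ℂ] V₁ => F t) (key j)
    simp only [LinearMap.comp_apply, LinearEquiv.coe_coe, Finsupp.lapply_apply] at this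
    rw [hcon] at this
    simpa using this
  have : E t = 0 := by
    apply E'.injective
    simpa using hz
  apply E.injective
  simpa using this

lemma exists_cL_ne {t : V₁ ⊗[ℂ] V₂} (ht : t ≠ 0) :
    ∃ φ : Module.Dual ℂ V₁, cL (V₂ := V₂) φ t ≠ 0 := by
  by_contra hcon
  push_neg at hcon
  apply ht
  classical
  set b := Basis.ofVectorSpace ℂ V₁ with hb
  set E := TensorProduct.congr b.repr (LinearEquiv.refl ℂ V₂) with hE
  set E' := TensorProduct.finsuppScalarLeft ℂ V₂ (Basis.ofVectorSpaceIndex ℂ V₁) with hE'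
  have key : ∀ j, (Finsupp.lapply j : (_ →₀ V₂) →ₗ[ℂ] V₂) ∘ₗ
      (E'.toLinearMap ∘ₗ E.toLinearMap) = cL (b.coord j) := by
    intro j
    apply TensorProduct.ext'
    intro v w
    simp only [LinearMap.comp_apply, LinearEquiv.coe_coe, hE, TensorProduct.congr_tmul,
      LinearEquiv.refl_apply, hE', Finsupp.lapply_apply,
      TensorProduct.finsuppScalarLeft_apply_tmul_apply, cL_tmul, Basis.coord_apply]
  have hz : E' (E t) = 0 := by
    ext j
    have := congrArg (fun F : V₁ ⊗[ℂ] V₂ →ₗ[ℂ] V₂ => F t) (key j)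
    simp only [LinearMap.comp_apply, LinearEquiv.coe_coe, Finsupp.lapply_apply] at this
    rw [hcon] at this
    simpa using this
  have : E t = 0 := by
    apply E'.injective
    simpa using hz
  apply E.injective
  simpa using this

lemma exists_tmul_ne {T : V₁ ⊗[ℂ] V₂ →ₗ[ℂ] V₁ ⊗[ℂ] V₂} (hT : T ≠ 0) :
    ∃ (v : V₁) (w : V₂), T (v ⊗ₜ[ℂ] w) ≠ 0 := by
  by_contra hcon
  push_neg at hcon
  exact hT (TensorProduct.ext' fun v w => by rw [hcon]; rfl)

end Contract

section Ext

variable {G₁ G₂ V₁ V₂ : Type*} [Group G₁] [Group G₂]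
  [AddCommGroup V₁] [Module ℂ V₁] [AddCommGroup V₂] [Module ℂ V₂]
  [FiniteDimensional ℂ V₁] [FiniteDimensional ℂ V₂]
  (σ₁ : Representation ℂ G₁ V₁) (σ₂ : Representation ℂ G₂ V₂)

lemma extProd_apply (x : G₁ × G₂) :
    (extProd σ₁ σ₂ x : V₁ ⊗[ℂ] V₂ →ₗ[ℂ] V₁ ⊗[ℂ] V₂)
      = TensorProduct.map (σ₁ x.1) (σ₂ x.2) := rfl

variable [Fintype G₁] [Fintype G₂]

lemma extProd_span_top (h₁ : IsIrreducibleRep σ₁) (h₂ : IsIrreducibleRep σ₂) :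
    Submodule.span ℂ (Set.range fun x : G₁ × G₂ =>
      (extProd σ₁ σ₂ x : V₁ ⊗[ℂ] V₂ →ₗ[ℂ] V₁ ⊗[ℂ] V₂)) = ⊤ := by
  set M := Submodule.span ℂ (Set.range fun x : G₁ × G₂ =>
      (extProd σ₁ σ₂ x : V₁ ⊗[ℂ] V₂ →ₗ[ℂ] V₁ ⊗[ℂ] V₂)) with hM
  have step1 : ∀ (g₁ : G₁) (f₂ : V₂ →ₗ[ℂ] V₂),
      f₂ ∈ Submodule.span ℂ (Set.range fun g : G₂ => (σ₂ g : V₂ →ₗ[ℂ] V₂)) →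
      TensorProduct.map (σ₁ g₁) f₂ ∈ M := by
    intro g₁ f₂ hf₂
    induction hf₂ using Submodule.span_induction with
    | mem f hfm =>
        obtain ⟨g₂, rfl⟩ := hfm
        exact Submodule.subset_span ⟨(g₁, g₂), rfl⟩
    | zero => rw [TensorProduct.map_zero_right]; exact Submodule.zero_mem _
    | add f f' _ _ h h' => rw [TensorProduct.map_add_right]; exact Submodule.add_mem _ h h'
    | smul a f _ h => rw [TensorProduct.map_smul_right]; exact Submodule.smul_mem _ a h
  have step2 : ∀ (f₁ : V₁ →ₗ[ℂ] V₁),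
      f₁ ∈ Submodule.span ℂ (Set.range fun g : G₁ => (σ₁ g : V₁ →ₗ[ℂ] V₁)) →
      ∀ f₂ : V₂ →ₗ[ℂ] V₂, TensorProduct.map f₁ f₂ ∈ M := by
    intro f₁ hf₁
    induction hf₁ using Submodule.span_induction with
    | mem f hfm =>
        obtain ⟨g₁, rfl⟩ := hfm
        intro f₂
        have hf₂ : f₂ ∈ Submodule.span ℂ (Set.range fun g : G₂ => (σ₂ g : V₂ →ₗ[ℂ] V₂)) := by
          rw [span_rep_eq_top h₂]; trivial
        exact step1 g₁ f₂ hf₂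
    | zero => intro f₂; rw [TensorProduct.map_zero_left]; exact Submodule.zero_mem _
    | add f f' _ _ h h' =>
        intro f₂; rw [TensorProduct.map_add_left]; exact Submodule.add_mem _ (h f₂) (h' f₂)
    | smul a f _ h =>
        intro f₂; rw [TensorProduct.map_smul_left]; exact Submodule.smul_mem _ a (h f₂)
  have hall : ∀ f₁ f₂, TensorProduct.map f₁ f₂ ∈ M := by
    intro f₁ f₂
    refine step2 f₁ ?_ f₂
    rw [span_rep_eq_top h₁]; trivial
  rw [eq_top_iff]
  rintro F -
  have hsurj : ∀ t : (V₁ →ₗ[ℂ] V₁) ⊗[ℂ] (V₂ →ₗ[ℂ] V₂),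
      TensorProduct.homTensorHomMap (RingHom.id ℂ) V₁ V₂ V₁ V₂ t ∈ M := by
    intro t
    induction t using TensorProduct.induction_on with
    | zero => rw [_root_.map_zero]; exact Submodule.zero_mem _
    | tmul f₁ f₂ =>
        rw [TensorProduct.homTensorHomMap_apply]
        exact hall f₁ f₂
    | add t t' h h' => rw [_root_.map_add]; exact Submodule.add_mem _ h h'
  have hFeq : F = TensorProduct.homTensorHomMap (RingHom.id ℂ) V₁ V₂ V₁ V₂
      ((homTensorHomEquiv ℂ V₁ V₂ V₁ V₂).symm F) := by
    rw [← homTensorHomEquiv_apply, LinearEquiv.apply_symm_apply]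
  rw [hFeq]
  exact hsurj _

lemma extProd_irred (h₁ : IsIrreducibleRep σ₁) (h₂ : IsIrreducibleRep σ₂) :
    IsIrreducibleRep (extProd σ₁ σ₂) := by
  haveI : Nontrivial V₁ := h₁.1
  haveI : Nontrivial V₂ := h₂.1
  constructor
  · apply Module.nontrivial_of_finrank_pos (R := ℂ)
    rw [Module.finrank_tensorProduct]
    exact Nat.mul_pos Module.finrank_pos Module.finrank_pos
  · intro U hU
    by_cases hbot : U = ⊥
    · exact Or.inl hbot
    right
    obtain ⟨t, htU, htne⟩ := Submodule.exists_mem_ne_zero_of_ne_bot hbot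
    rw [eq_top_iff]
    rintro s -
    have hφ : ∃ φ : Module.Dual ℂ (V₁ ⊗[ℂ] V₂), φ t ≠ 0 := by
      by_contra hcon
      push_neg at hcon
      exact htne ((Module.forall_dual_apply_eq_zero_iff ℂ t).mp hcon)
    obtain ⟨φ, hφ⟩ := hφ
    set f := LinearMap.smulRight ((φ t)⁻¹ • φ) s with hf
    have hft : f t = s := by
      simp [hf, smul_smul, inv_mul_cancel₀ hφ]
    rw [← hft]
    refine mem_of_span_apply _ hU ?_ htU
    rw [extProd_span_top σ₁ σ₂ h₁ h₂]; trivial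

end Ext

end Stmt4Aux

set_option maxHeartbeats 1000000 in
/-- If the restriction of `σ₁ ⊠ σ₂` (with `σ₁, σ₂` irreducible representations of
`GL(2,𝔽_q)`, `q` odd) to the equal-determinant subgroup `(GL(2,q)²)⁰` is reducible,
then `lam0σ₁ ≅ σ₁` and `lam0σ₂ ≅ σ₂` for the nontrivial quadratic character `lam0` of
`𝔽_q^×`, and the restriction splits as a direct sum of two irreducible constituents
of equal dimension. -/
theorem stmt4 {F : Type*} [Field F] [Fintype F] [DecidableEq F]
    (hodd : Odd (Fintype.card F))
    {V₁ V₂ : Type*} [AddCommGroup V₁] [Module ℂ V₁] [FiniteDimensional ℂ V₁]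
    [AddCommGroup V₂] [Module ℂ V₂] [FiniteDimensional ℂ V₂]
    (σ₁ : Representation ℂ (GL (Fin 2) F) V₁) (σ₂ : Representation ℂ (GL (Fin 2) F) V₂)
    (h₁ : IsIrreducibleRep σ₁) (h₂ : IsIrreducibleRep σ₂)
    (lam0 : Fˣ →* ℂˣ) (hlamne : lam0 ≠ 1) (hlamsq : ∀ x : Fˣ, (lam0 x) ^ 2 = 1)
    -- the restriction of `σ₁ ⊠ σ₂` to `(GL(2,q)²)⁰` is reducible:
    (hred : ¬ IsIrreducibleRep
      ((extProd σ₁ σ₂).comp (eqDetSubgroup F).subtype)) :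
    -- `lam0σ₁ ≅ σ₁`
    (∃ e : V₁ ≃ₗ[ℂ] V₁, ∀ (g : GL (Fin 2) F) (v : V₁),
      e (σ₁ g v) = (lam0 (Matrix.GeneralLinearGroup.det g) : ℂ) • σ₁ g (e v)) ∧
    -- `lam0σ₂ ≅ σ₂`
    (∃ e : V₂ ≃ₗ[ℂ] V₂, ∀ (g : GL (Fin 2) F) (v : V₂),
      e (σ₂ g v) = (lam0 (Matrix.GeneralLinearGroup.det g) : ℂ) • σ₂ g (e v)) ∧
    -- the restriction splits as a direct sum of two irreducible constituents of
    -- equal dimension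
    (∃ W₁ W₂ : Submodule ℂ (V₁ ⊗[ℂ] V₂),
      IsSubrep ((extProd σ₁ σ₂).comp (eqDetSubgroup F).subtype) W₁ ∧
      IsSubrep ((extProd σ₁ σ₂).comp (eqDetSubgroup F).subtype) W₂ ∧
      IsCompl W₁ W₂ ∧
      Module.finrank ℂ W₁ = Module.finrank ℂ W₂ ∧
      W₁ ≠ ⊥ ∧ W₂ ≠ ⊥ ∧
      (∀ U : Submodule ℂ (V₁ ⊗[ℂ] V₂),
        IsSubrep ((extProd σ₁ σ₂).comp (eqDetSubgroup F).subtype) U →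
          U ≤ W₁ → U = ⊥ ∨ U = W₁) ∧
      (∀ U : Submodule ℂ (V₁ ⊗[ℂ] V₂),
        IsSubrep ((extProd σ₁ σ₂).comp (eqDetSubgroup F).subtype) U →
          U ≤ W₂ → U = ⊥ ∨ U = W₂)) := by
    classical
  open Stmt4Aux in
  -- notation
  set π : Representation ℂ (GL (Fin 2) F × GL (Fin 2) F) (V₁ ⊗[ℂ] V₂) := extProd σ₁ σ₂ with hπdef
  set ρH : Representation ℂ ↥(eqDetSubgroup F) (V₁ ⊗[ℂ] V₂) :=
    (extProd σ₁ σ₂).comp (eqDetSubgroup F).subtype with hρH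
  haveI : Fintype (GL (Fin 2) F) := inferInstance
  haveI : Fintype ↥(eqDetSubgroup F) := Fintype.ofFinite _
  have hπirr : IsIrreducibleRep π := extProd_irred σ₁ σ₂ h₁ h₂
  haveI hVnt : Nontrivial (V₁ ⊗[ℂ] V₂) := hπirr.1
  haveI : Nontrivial V₁ := h₁.1
  haveI : Nontrivial V₂ := h₂.1
  -- basic helpers
  have hππ : ∀ (p q : GL (Fin 2) F × GL (Fin 2) F) (v : V₁ ⊗[ℂ] V₂),
      π p (π q v) = π (p * q) v := by
    intro p q v; rw [_root_.map_mul]; rfl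
  have hπinv : ∀ (p : GL (Fin 2) F × GL (Fin 2) F) (v : V₁ ⊗[ℂ] V₂),
      π p (π p⁻¹ v) = v := fun p v => rep_comp_inv_cancel π p v
  have hmemH : ∀ x : GL (Fin 2) F × GL (Fin 2) F, x ∈ eqDetSubgroup F ↔
      Matrix.GeneralLinearGroup.det x.1 = Matrix.GeneralLinearGroup.det x.2 := fun _ => Iff.rfl
  -- square roots of one
  have sq1 : ∀ z : ℂ, z * z = 1 → z = 1 ∨ z = -1 := by
    intro z hz
    have h0 : (z - 1) * (z + 1) = 0 := by ring_nf; linear_combination hz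
    rcases mul_eq_zero.mp h0 with h | h
    · exact Or.inl (by linear_combination h)
    · exact Or.inr (by linear_combination h)
  -- a generator of `Fˣ`
  obtain ⟨u, hu⟩ := IsCyclic.exists_generator (α := Fˣ)
  have hlam_mul : ∀ x : Fˣ, (lam0 x : ℂ) * (lam0 x : ℂ) = 1 := by
    intro x
    have := hlamsq x
    have h2 : ((lam0 x) ^ 2 : ℂˣ) = (1 : ℂˣ) := this
    calc (lam0 x : ℂ) * (lam0 x : ℂ) = (((lam0 x) ^ 2 : ℂˣ) : ℂ) := by
          rw [pow_two]; rfl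
    _ = 1 := by rw [h2]; rfl
  have hlam_ne : ∀ x : Fˣ, (lam0 x : ℂ) ≠ 0 := fun x => Units.ne_zero _
  have hlam_invval : ∀ x : Fˣ, (lam0 x⁻¹ : ℂ) = (lam0 x : ℂ) := by
    intro x
    have : (lam0 x⁻¹ : ℂ) * (lam0 x : ℂ) = 1 := by
      rw [← Units.val_mul, ← _root_.map_mul, inv_mul_cancel, _root_.map_one, Units.val_one]
    calc (lam0 x⁻¹ : ℂ) = (lam0 x⁻¹ : ℂ) * ((lam0 x : ℂ) * (lam0 x : ℂ)) := by
          rw [hlam_mul, mul_one]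
    _ = ((lam0 x⁻¹ : ℂ) * (lam0 x : ℂ)) * (lam0 x : ℂ) := by ring
    _ = (lam0 x : ℂ) := by rw [this, one_mul]
  have hlamu : (lam0 u : ℂ) = -1 := by
    rcases sq1 _ (hlam_mul u) with h | h
    · exfalso
      apply hlamne
      ext x
      obtain ⟨k, hk⟩ := Subgroup.mem_zpowers_iff.mp (hu x)
      have : (lam0 x : ℂ) = 1 := by
        rw [← hk, map_zpow]
        calc ((lam0 u ^ k : ℂˣ) : ℂ) = (lam0 u : ℂ) ^ k := by
              rw [Units.val_zpow_eq_zpow_val]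
        _ = 1 := by rw [h, _root_.one_zpow]
      have : lam0 x = 1 := Units.ext (by simpa using this)
      simpa using this
    · exact h
  -- the element `a` with determinant `u`
  set A : Matrix (Fin 2) (Fin 2) F := Matrix.diagonal ![(u : F), 1] with hAdef
  have hdetA : A.det = (u : F) := by
    rw [hAdef, Matrix.det_diagonal]
    simp [Fin.prod_univ_two]
  have hdetA0 : A.det ≠ 0 := by rw [hdetA]; exact Units.ne_zero u
  set a : GL (Fin 2) F := Matrix.GeneralLinearGroup.mkOfDetNeZero A hdetA0 with hadef
  have hdeta : Matrix.GeneralLinearGroup.det a = u := by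
    apply Units.ext
    rw [Matrix.GeneralLinearGroup.val_det_apply]
    exact hdetA
  set g₀ : GL (Fin 2) F × GL (Fin 2) F := (a, 1) with hg₀def
  -- the central scalar element
  set sc : GL (Fin 2) F := Units.map (Matrix.scalar (Fin 2)).toMonoidHom u with hscdef
  have hdetsc : Matrix.GeneralLinearGroup.det sc = u * u := by
    apply Units.ext
    rw [Matrix.GeneralLinearGroup.val_det_apply]
    show (Matrix.scalar (Fin 2) (u : F)).det = ((u * u : Fˣ) : F)
    rw [Matrix.scalar_apply, Matrix.det_diagonal]
    simp [Fin.prod_univ_two]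
    ring
  have hsc_comm : ∀ g : GL (Fin 2) F, sc * g = g * sc := by
    intro g
    apply Units.ext
    rw [Units.val_mul, Units.val_mul]
    exact Matrix.scalar_commute (u : F) (fun r' => mul_comm _ _) _
  -- `σ₂ sc` is a nonzero scalar
  obtain ⟨ω, hω⟩ := schur_scalar h₂ (f := σ₂ sc) (fun g => by
    rw [← Module.End.mul_eq_comp, ← Module.End.mul_eq_comp, ← _root_.map_mul, ← _root_.map_mul,
      hsc_comm g])
  have hωne : ω ≠ 0 := by
    intro h0
    obtain ⟨v, hv⟩ := exists_ne (0 : V₂)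
    apply hv
    have h3 := rep_comp_inv_cancel σ₂ sc v
    rw [hω, h0] at h3
    simpa using h3.symm
  -- decomposition of an arbitrary element as H-element times power of g₀
  have hdecomp : ∀ x : GL (Fin 2) F × GL (Fin 2) F, ∃ k : ℕ,
      x * (g₀ ^ k)⁻¹ ∈ eqDetSubgroup F ∧
      Matrix.GeneralLinearGroup.det x.1 * (Matrix.GeneralLinearGroup.det x.2)⁻¹ = u ^ k := by
    intro x
    set d := Matrix.GeneralLinearGroup.det x.1 * (Matrix.GeneralLinearGroup.det x.2)⁻¹ with hd
    have hd1 : d ∈ Subgroup.zpowers u := hu d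
    have hfin : IsOfFinOrder u := isOfFinOrder_of_finite u
    obtain ⟨k, hk0⟩ := hfin.mem_powers_iff_mem_zpowers.mpr hd1
    have hk : u ^ k = d := hk0
    refine ⟨k, ?_, hk.symm⟩
    rw [hmemH]
    have h1 : (x * (g₀ ^ k)⁻¹).1 = x.1 * (a ^ k)⁻¹ := by
      simp [hg₀def]
    have h2 : (x * (g₀ ^ k)⁻¹).2 = x.2 := by
      simp [hg₀def]
    rw [h1, h2, _root_.map_mul, _root_.map_inv, _root_.map_pow, hdeta]
    have : (u ^ k)⁻¹ = Matrix.GeneralLinearGroup.det x.2 *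
        (Matrix.GeneralLinearGroup.det x.1)⁻¹ := by
      rw [hk, hd, _root_.mul_inv_rev, inv_inv]
    rw [this, mul_comm (Matrix.GeneralLinearGroup.det x.2) _, ← mul_assoc]
    rw [mul_inv_cancel, one_mul]
  -- powers of the semi-commutation relation
  have hpow : ∀ (S : V₁ ⊗[ℂ] V₂ →ₗ[ℂ] V₁ ⊗[ℂ] V₂) (ε : ℂ),
      (∀ v, S (π g₀ v) = ε • π g₀ (S v)) →
      ∀ (k : ℕ) (v), S (π (g₀ ^ k) v) = ε ^ k • π (g₀ ^ k) (S v) := by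
    intro S ε hS k
    induction k with
    | zero => intro v; simp
    | succ k ih =>
        intro v
        have hπ1 : π (g₀ ^ (k + 1)) v = π (g₀ ^ k) (π g₀ v) := by rw [hππ, ← pow_succ]
        rw [hπ1, ih, hS, _root_.map_smul, smul_smul, hππ, ← pow_succ, ← pow_succ]
  -- full semi-commutation from H-commutation plus g₀-anticommutation
  have hsemi : ∀ (S : V₁ ⊗[ℂ] V₂ →ₗ[ℂ] V₁ ⊗[ℂ] V₂),
      (∀ p ∈ eqDetSubgroup F, ∀ v, S (π p v) = π p (S v)) →
      (∀ v, S (π g₀ v) = (-1 : ℂ) • π g₀ (S v)) →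
      ∀ (x : GL (Fin 2) F × GL (Fin 2) F) (v),
        S (π x v) = (lam0 (Matrix.GeneralLinearGroup.det x.1 *
          (Matrix.GeneralLinearGroup.det x.2)⁻¹) : ℂ) • π x (S v) := by
    intro S hH hg x v
    obtain ⟨k, hmem, hk⟩ := hdecomp x
    have hx : x = (x * (g₀ ^ k)⁻¹) * g₀ ^ k := by rw [inv_mul_cancel_right]
    have hval : (lam0 (Matrix.GeneralLinearGroup.det x.1 *
        (Matrix.GeneralLinearGroup.det x.2)⁻¹) : ℂ) = (-1 : ℂ) ^ k := by
      rw [hk, map_pow]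
      calc ((lam0 u ^ k : ℂˣ) : ℂ) = (lam0 u : ℂ) ^ k := by
            rw [Units.val_pow_eq_pow_val]
      _ = (-1 : ℂ) ^ k := by rw [hlamu]
    rw [hval]
    conv_lhs => rw [hx]
    rw [← hππ, hH _ hmem, hpow S (-1 : ℂ) hg k, _root_.map_smul, hππ, ← hx]
  -- commutation with everything from H-commutation plus g₀-commutation
  have hcommAll : ∀ (S : V₁ ⊗[ℂ] V₂ →ₗ[ℂ] V₁ ⊗[ℂ] V₂),
      (∀ p ∈ eqDetSubgroup F, ∀ v, S (π p v) = π p (S v)) →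
      (∀ v, S (π g₀ v) = π g₀ (S v)) →
      ∀ (x : GL (Fin 2) F × GL (Fin 2) F) (v), S (π x v) = π x (S v) := by
    intro S hH hg x v
    obtain ⟨k, hmem, -⟩ := hdecomp x
    have hx : x = (x * (g₀ ^ k)⁻¹) * g₀ ^ k := by rw [inv_mul_cancel_right]
    have hp : ∀ v, S (π (g₀ ^ k) v) = π (g₀ ^ k) (S v) := by
      intro v
      have := hpow S 1 (fun v => by rw [hg, one_smul]) k v
      simpa using this
    conv_lhs => rw [hx]
    rw [← hππ, hH _ hmem, hp, hππ, ← hx]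
  -- scalar from Schur for fully commuting maps
  have hscalar : ∀ (S : V₁ ⊗[ℂ] V₂ →ₗ[ℂ] V₁ ⊗[ℂ] V₂),
      (∀ p ∈ eqDetSubgroup F, ∀ v, S (π p v) = π p (S v)) →
      (∀ v, S (π g₀ v) = π g₀ (S v)) →
      ∃ c : ℂ, S = c • LinearMap.id := by
    intro S hH hg
    apply schur_scalar hπirr
    intro x
    apply LinearMap.ext
    intro v
    exact hcommAll S hH hg x v
  -- bijectivity of nonzero semi-intertwiners
  have hbij : ∀ (S : V₁ ⊗[ℂ] V₂ →ₗ[ℂ] V₁ ⊗[ℂ] V₂),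
      (∀ p ∈ eqDetSubgroup F, ∀ v, S (π p v) = π p (S v)) →
      (∀ v, S (π g₀ v) = (-1 : ℂ) • π g₀ (S v)) →
      S ≠ 0 → Function.Bijective S := by
    intro S hH hg hSne
    have hS := hsemi S hH hg
    constructor
    · rw [← LinearMap.ker_eq_bot]
      have hker : IsSubrep π (LinearMap.ker S) := by
        intro x v hv
        rw [LinearMap.mem_ker] at hv ⊢
        rw [hS x v, hv]
        simp
      rcases hπirr.2 _ hker with h | h
      · exact h
      · exact absurd (LinearMap.ker_eq_top.mp h) hSne
    · rw [← LinearMap.range_eq_top]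
      have hrange : IsSubrep π (LinearMap.range S) := by
        rintro x _ ⟨v, rfl⟩
        refine ⟨(lam0 (Matrix.GeneralLinearGroup.det x.1 *
          (Matrix.GeneralLinearGroup.det x.2)⁻¹) : ℂ)⁻¹ • π x v, ?_⟩
        rw [_root_.map_smul, hS x v, smul_smul, inv_mul_cancel₀ (hlam_ne _), one_smul]
      rcases hπirr.2 _ hrange with h | h
      · exact absurd (LinearMap.range_eq_bot.mp h) hSne
      · exact h
  -- commutation with `π (g₀ * g₀)` for any H-commuting map
  have hg2comm : ∀ (S : V₁ ⊗[ℂ] V₂ →ₗ[ℂ] V₁ ⊗[ℂ] V₂),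
      (∀ p ∈ eqDetSubgroup F, ∀ v, S (π p v) = π p (S v)) →
      ∀ v, S (π (g₀ * g₀) v) = π (g₀ * g₀) (S v) := by
    intro S hH
    have hhmem : ((a * a, sc) : GL (Fin 2) F × GL (Fin 2) F) ∈ eqDetSubgroup F := by
      rw [hmemH]
      show Matrix.GeneralLinearGroup.det (a * a) = Matrix.GeneralLinearGroup.det sc
      rw [_root_.map_mul, hdeta, hdetsc]
    have hfactor : (g₀ * g₀ : GL (Fin 2) F × GL (Fin 2) F)
        = (a * a, sc) * (1, sc⁻¹) := by
      rw [Prod.ext_iff]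
      constructor
      · show a * a = a * a * 1
        rw [mul_one]
      · show (1 : GL (Fin 2) F) * 1 = sc * sc⁻¹
        rw [mul_one, mul_inv_cancel]
    have hcentral : ∀ v : V₁ ⊗[ℂ] V₂, π ((1, sc⁻¹) : GL (Fin 2) F × GL (Fin 2) F) v
        = ω⁻¹ • v := by
      intro v
      have hsinv : (σ₂ sc⁻¹ : V₂ →ₗ[ℂ] V₂) = ω⁻¹ • LinearMap.id := by
        have h5 : (σ₂ sc : V₂ →ₗ[ℂ] V₂) ∘ₗ (σ₂ sc⁻¹ : V₂ →ₗ[ℂ] V₂) = LinearMap.id := by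
          apply LinearMap.ext; intro w
          exact rep_comp_inv_cancel σ₂ sc w
        rw [hω] at h5
        apply LinearMap.ext
        intro w
        have h6 := congrArg (fun f : V₂ →ₗ[ℂ] V₂ => f w) h5
        simp only [LinearMap.comp_apply, LinearMap.smul_apply, LinearMap.id_apply] at h6 ⊢
        conv_rhs => rw [← h6]
        rw [smul_smul, inv_mul_cancel₀ hωne, one_smul]
      show (extProd σ₁ σ₂ ((1, sc⁻¹) : GL (Fin 2) F × GL (Fin 2) F)) v = ω⁻¹ • v
      rw [extProd_apply]
      show TensorProduct.map (σ₁ 1) (σ₂ sc⁻¹) v = ω⁻¹ • v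
      rw [_root_.map_one, hsinv]
      have : TensorProduct.map (1 : V₁ →ₗ[ℂ] V₁) (ω⁻¹ • LinearMap.id)
          = ω⁻¹ • (LinearMap.id : V₁ ⊗[ℂ] V₂ →ₗ[ℂ] V₁ ⊗[ℂ] V₂) := by
        rw [TensorProduct.map_smul_right]
        congr 1
        apply TensorProduct.ext'
        intro v w
        rfl
      rw [this]
      rfl
    intro v
    have hrhs : π (g₀ * g₀) (S v) = ω⁻¹ • π ((a * a, sc) : GL (Fin 2) F × GL (Fin 2) F) (S v) := by
      rw [hfactor, ← hππ, hcentral, _root_.map_smul]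
    have hlhs : S (π (g₀ * g₀) v) = ω⁻¹ • π ((a * a, sc) : GL (Fin 2) F × GL (Fin 2) F) (S v) := by
      rw [hfactor, ← hππ, hcentral, _root_.map_smul, _root_.map_smul, hH _ hhmem]
    rw [hlhs, hrhs]

  -- `g₀`-conjugation preserves membership in H
  have hnorm : ∀ p ∈ eqDetSubgroup F, g₀⁻¹ * p * g₀ ∈ eqDetSubgroup F := by
    intro p hp
    rw [hmemH] at hp ⊢
    have h1 : (g₀⁻¹ * p * g₀).1 = a⁻¹ * p.1 * a := by simp [hg₀def]
    have h2 : (g₀⁻¹ * p * g₀).2 = p.2 := by simp [hg₀def]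
    rw [h1, h2, _root_.map_mul, _root_.map_mul, _root_.map_inv, hdeta]
    rw [mul_comm, ← mul_assoc]
    rw [mul_inv_cancel, one_mul]
    exact hp
  -- decomposing an H-commuting operator into a commuting and an anticommuting part
  have hprocess : ∀ Q : V₁ ⊗[ℂ] V₂ →ₗ[ℂ] V₁ ⊗[ℂ] V₂,
      (∀ p ∈ eqDetSubgroup F, ∀ v, Q (π p v) = π p (Q v)) →
      ∃ (α : ℂ) (T' : V₁ ⊗[ℂ] V₂ →ₗ[ℂ] V₁ ⊗[ℂ] V₂),
        (∀ p ∈ eqDetSubgroup F, ∀ v, T' (π p v) = π p (T' v)) ∧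
        (∀ v, T' (π g₀ v) = (-1 : ℂ) • π g₀ (T' v)) ∧
        (∀ v, Q v = α • v + T' v) := by
    intro Q hQH
    set R : V₁ ⊗[ℂ] V₂ →ₗ[ℂ] V₁ ⊗[ℂ] V₂ := π g₀ ∘ₗ Q ∘ₗ π g₀⁻¹ with hRdef
    have hRv : ∀ v, R v = π g₀ (Q (π g₀⁻¹ v)) := fun v => rfl
    have hRH : ∀ p ∈ eqDetSubgroup F, ∀ v, R (π p v) = π p (R v) := by
      intro p hp v
      rw [hRv, hRv]
      have e1 : π g₀⁻¹ (π p v) = π (g₀⁻¹ * p * g₀) (π g₀⁻¹ v) := by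
        rw [hππ, hππ, mul_inv_cancel_right]
      rw [e1, hQH _ (hnorm p hp), hππ, hππ]
      have e2 : g₀ * (g₀⁻¹ * p * g₀) = p * g₀ := by group
      rw [e2, ← hππ]
    have hQinv : ∀ v, π g₀⁻¹ (π g₀ v) = v := fun v => by
      rw [hππ, inv_mul_cancel, _root_.map_one]; rfl
    have hRg : ∀ v, R (π g₀ v) = π g₀ (Q v) := by
      intro v
      rw [hRv, hQinv]
    have hQg : ∀ v, Q (π g₀ v) = π g₀ (R v) := by
      intro v
      have h7 := hg2comm Q hQH
      calc Q (π g₀ v) = Q (π (g₀ * g₀) (π g₀⁻¹ v)) := by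
            rw [hππ, mul_inv_cancel_right]
      _ = π (g₀ * g₀) (Q (π g₀⁻¹ v)) := h7 _
      _ = π g₀ (π g₀ (Q (π g₀⁻¹ v))) := by rw [hππ]
      _ = π g₀ (R v) := by rw [hRv]
    have hscal : ∃ α : ℂ, (2⁻¹ : ℂ) • (Q + R) = α • LinearMap.id := by
      apply hscalar
      · intro p hp v
        simp only [LinearMap.smul_apply, LinearMap.add_apply]
        rw [hQH p hp, hRH p hp, ← _root_.map_add (π p), ← _root_.map_smul (π p)]
      · intro v
        simp only [LinearMap.smul_apply, LinearMap.add_apply]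
        rw [hQg, hRg, ← _root_.map_add (π g₀), ← _root_.map_smul (π g₀)]
        rw [add_comm (R v) (Q v)]
    obtain ⟨α, hα⟩ := hscal
    refine ⟨α, (2⁻¹ : ℂ) • (Q - R), ?_, ?_, ?_⟩
    · intro p hp v
      simp only [LinearMap.smul_apply, LinearMap.sub_apply]
      rw [hQH p hp, hRH p hp, ← _root_.map_sub (π p), ← _root_.map_smul (π p)]
    · intro v
      have hL : ((2⁻¹ : ℂ) • (Q - R)) (π g₀ v) = π g₀ ((2⁻¹ : ℂ) • (R v - Q v)) := by
        simp only [LinearMap.smul_apply, LinearMap.sub_apply]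
        rw [hQg, hRg, ← _root_.map_sub (π g₀), ← _root_.map_smul (π g₀)]
      have hR2 : (-1 : ℂ) • π g₀ (((2⁻¹ : ℂ) • (Q - R)) v)
          = π g₀ ((-1 : ℂ) • ((2⁻¹ : ℂ) • (Q v - R v))) := by
        simp only [LinearMap.smul_apply, LinearMap.sub_apply]
        rw [← _root_.map_smul (π g₀)]
      rw [hL, hR2]
      congr 1
      module
    · intro v
      have h8 : α • v = (2⁻¹ : ℂ) • (Q v + R v) := by
        have h9 := congrArg (fun f : V₁ ⊗[ℂ] V₂ →ₗ[ℂ] V₁ ⊗[ℂ] V₂ => f v) hα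
        simp only [LinearMap.smul_apply, LinearMap.add_apply, LinearMap.id_apply] at h9
        exact h9.symm
      rw [h8]
      simp only [LinearMap.smul_apply, LinearMap.sub_apply]
      module
  -- a reducing subspace exists
  have hex : ∃ W : Submodule ℂ (V₁ ⊗[ℂ] V₂), IsSubrep ρH W ∧ W ≠ ⊥ ∧ W ≠ ⊤ := by
    by_contra hcon
    push_neg at hcon
    apply hred
    refine ⟨hVnt, fun W hW => ?_⟩
    by_cases hb : W = ⊥
    · exact Or.inl hb
    · exact Or.inr (hcon W hW hb)
  obtain ⟨W, hWsub, hWbot, hWtop⟩ := hex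
  obtain ⟨Q, hQc, hQfix, hQmem⟩ := maschke ρH hWsub
  have hQH : ∀ p ∈ eqDetSubgroup F, ∀ v, Q (π p v) = π p (Q v) := by
    intro p hp v
    have h9 := congrArg (fun f : V₁ ⊗[ℂ] V₂ →ₗ[ℂ] V₁ ⊗[ℂ] V₂ => f v) (hQc ⟨p, hp⟩)
    simp only [LinearMap.comp_apply] at h9
    exact h9
  obtain ⟨α, T', hT'H, hT'g, hQdecomp⟩ := hprocess Q hQH
  have hT'ne : T' ≠ 0 := by
    intro h0
    have hQα : ∀ v, Q v = α • v := by
      intro v; rw [hQdecomp v, h0]; simp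
    rcases eq_or_ne α 0 with rfl | hαne
    · apply hWbot
      rw [Submodule.eq_bot_iff]
      intro w hw
      rw [← hQfix w hw, hQα]
      simp
    · apply hWtop
      rw [eq_top_iff]
      rintro v -
      have h10 : Q v ∈ W := hQmem v
      rw [hQα] at h10
      have h11 := W.smul_mem α⁻¹ h10
      rwa [smul_smul, inv_mul_cancel₀ hαne, one_smul] at h11
  have hT'bij : Function.Bijective T' := hbij T' hT'H hT'g hT'ne
  have hsq : ∃ c : ℂ, T' ∘ₗ T' = c • LinearMap.id := by
    apply hscalar
    · intro p hp v
      simp only [LinearMap.comp_apply]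
      rw [hT'H p hp, hT'H p hp]
    · intro v
      simp only [LinearMap.comp_apply]
      rw [hT'g, _root_.map_smul T', hT'g, smul_smul]
      norm_num
  obtain ⟨c, hc⟩ := hsq
  have hcptl : ∀ v, T' (T' v) = c • v := by
    intro v
    have h12 := congrArg (fun f : V₁ ⊗[ℂ] V₂ →ₗ[ℂ] V₁ ⊗[ℂ] V₂ => f v) hc
    simpa using h12
  have hcne : c ≠ 0 := by
    intro h0
    obtain ⟨v, hv⟩ := exists_ne (0 : V₁ ⊗[ℂ] V₂)
    apply hv
    have h13 : T' (T' v) = 0 := by rw [hcptl v, h0, zero_smul]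
    have h14 : T' v = 0 := hT'bij.1 (by rw [h13, _root_.map_zero])
    exact hT'bij.1 (by rw [h14, _root_.map_zero])
  obtain ⟨s, hs⟩ := IsAlgClosed.exists_pow_nat_eq c (n := 2) (by norm_num)
  have hsne : s ≠ 0 := by
    intro h0
    apply hcne
    rw [← hs, h0]
    ring
  set T : V₁ ⊗[ℂ] V₂ →ₗ[ℂ] V₁ ⊗[ℂ] V₂ := s⁻¹ • T' with hTdef
  have hTv : ∀ v, T v = s⁻¹ • T' v := fun v => rfl
  have hTH : ∀ p ∈ eqDetSubgroup F, ∀ v, T (π p v) = π p (T v) := by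
    intro p hp v
    rw [hTv, hTv, hT'H p hp, _root_.map_smul]
  have hTg : ∀ v, T (π g₀ v) = (-1 : ℂ) • π g₀ (T v) := by
    intro v
    rw [hTv, hTv, hT'g, _root_.map_smul, smul_smul, smul_smul, mul_comm]
  have hTsemi := hsemi T hTH hTg
  have hT2 : ∀ v, T (T v) = v := by
    intro v
    rw [hTv, hTv, _root_.map_smul, smul_smul, hcptl, smul_smul]
    have : s⁻¹ * s⁻¹ * c = 1 := by
      rw [← hs]
      field_simp
    rw [this, one_smul]
  have hTne : T ≠ 0 := by
    intro h0
    obtain ⟨v, hv⟩ := exists_ne (0 : V₁ ⊗[ℂ] V₂)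
    apply hv
    rw [← hT2 v, h0]
    simp

  -- specialized semi-commutation
  have hsemi1 : ∀ (g : GL (Fin 2) F) (t : V₁ ⊗[ℂ] V₂),
      T (π (g, 1) t) = (lam0 (Matrix.GeneralLinearGroup.det g) : ℂ) • π (g, 1) (T t) := by
    intro g t
    have h := hTsemi (g, 1) t
    simp only [_root_.map_one, inv_one, mul_one] at h
    exact h
  have hsemi2 : ∀ (g : GL (Fin 2) F) (t : V₁ ⊗[ℂ] V₂),
      T (π (1, g) t) = (lam0 (Matrix.GeneralLinearGroup.det g) : ℂ) • π (1, g) (T t) := by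
    intro g t
    have h := hTsemi (1, g) t
    simp only [_root_.map_one, one_mul] at h
    rw [hlam_invval] at h
    exact h
  -- how π acts on pure tensors
  have hπ1 : ∀ (g : GL (Fin 2) F) (v : V₁) (w : V₂),
      π (g, 1) (v ⊗ₜ[ℂ] w) = (σ₁ g v) ⊗ₜ[ℂ] w := by
    intro g v w
    show TensorProduct.map (σ₁ g) (σ₂ 1) (v ⊗ₜ[ℂ] w) = _
    rw [_root_.map_one]
    rfl
  have hπ2 : ∀ (g : GL (Fin 2) F) (v : V₁) (w : V₂),
      π (1, g) (v ⊗ₜ[ℂ] w) = v ⊗ₜ[ℂ] (σ₂ g w) := by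
    intro g v w
    show TensorProduct.map (σ₁ 1) (σ₂ g) (v ⊗ₜ[ℂ] w) = _
    rw [_root_.map_one]
    rfl
  -- contractions intertwine
  have hcRπ : ∀ (φ : Module.Dual ℂ V₂) (g : GL (Fin 2) F) (t : V₁ ⊗[ℂ] V₂),
      cR φ (π (g, 1) t) = σ₁ g (cR φ t) := by
    intro φ g t
    have hm : (π ((g, 1) : GL (Fin 2) F × GL (Fin 2) F) : V₁ ⊗[ℂ] V₂ →ₗ[ℂ] V₁ ⊗[ℂ] V₂)
        = TensorProduct.map (σ₁ g) LinearMap.id := by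
      show TensorProduct.map (σ₁ g) (σ₂ 1) = _
      rw [_root_.map_one]
      rfl
    have h := congrArg (fun f : V₁ ⊗[ℂ] V₂ →ₗ[ℂ] V₁ => f t) (cR_map (V₁ := V₁) (V₂ := V₂) φ (σ₁ g))
    simp only [LinearMap.comp_apply] at h
    rw [show π ((g, 1) : GL (Fin 2) F × GL (Fin 2) F) t
        = TensorProduct.map (σ₁ g) LinearMap.id t from by rw [← hm]]
    exact h
  have hcLπ : ∀ (φ : Module.Dual ℂ V₁) (g : GL (Fin 2) F) (t : V₁ ⊗[ℂ] V₂),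
      cL φ (π (1, g) t) = σ₂ g (cL φ t) := by
    intro φ g t
    have hm : (π ((1, g) : GL (Fin 2) F × GL (Fin 2) F) : V₁ ⊗[ℂ] V₂ →ₗ[ℂ] V₁ ⊗[ℂ] V₂)
        = TensorProduct.map LinearMap.id (σ₂ g) := by
      show TensorProduct.map (σ₁ 1) (σ₂ g) = _
      rw [_root_.map_one]
      rfl
    have h := congrArg (fun f : V₁ ⊗[ℂ] V₂ →ₗ[ℂ] V₂ => f t) (cL_map (V₁ := V₁) (V₂ := V₂) φ (σ₂ g))
    simp only [LinearMap.comp_apply] at h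
    rw [show π ((1, g) : GL (Fin 2) F × GL (Fin 2) F) t
        = TensorProduct.map LinearMap.id (σ₂ g) t from by rw [← hm]]
    exact h
  obtain ⟨v₀, w₀, hvw⟩ := exists_tmul_ne hTne
  refine ⟨?_, ?_, ?_⟩
  · -- first equivalence
    obtain ⟨φ, hφ⟩ := exists_cR_ne hvw
    set e0 : V₁ →ₗ[ℂ] V₁ := cR φ ∘ₗ T ∘ₗ ((TensorProduct.mk ℂ V₁ V₂).flip w₀) with he0
    have he0v : ∀ v, e0 v = cR φ (T (v ⊗ₜ[ℂ] w₀)) := fun v => rfl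
    have hkey : ∀ g v, e0 (σ₁ g v)
        = (lam0 (Matrix.GeneralLinearGroup.det g) : ℂ) • σ₁ g (e0 v) := by
      intro g v
      rw [he0v, he0v, ← hπ1 g v w₀, hsemi1, _root_.map_smul, hcRπ]
    have he0ne : e0 ≠ 0 := by
      intro h0
      apply hφ
      rw [← he0v v₀, h0]
      simp
    have hker : LinearMap.ker e0 = ⊥ := by
      have hsub : IsSubrep σ₁ (LinearMap.ker e0) := by
        intro g v hv
        rw [LinearMap.mem_ker] at hv ⊢
        rw [hkey, hv, _root_.map_zero, smul_zero]
      rcases h₁.2 _ hsub with h | h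
      · exact h
      · exact absurd (LinearMap.ker_eq_top.mp h) he0ne
    have hrange : LinearMap.range e0 = ⊤ := by
      have hsub : IsSubrep σ₁ (LinearMap.range e0) := by
        rintro g _ ⟨v, rfl⟩
        refine ⟨(lam0 (Matrix.GeneralLinearGroup.det g) : ℂ)⁻¹ • σ₁ g v, ?_⟩
        rw [_root_.map_smul, hkey, smul_smul, inv_mul_cancel₀ (hlam_ne _), one_smul]
      rcases h₁.2 _ hsub with h | h
      · exact absurd (LinearMap.range_eq_bot.mp h) he0ne
      · exact h
    exact ⟨LinearEquiv.ofBijective e0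
      ⟨LinearMap.ker_eq_bot.mp hker, LinearMap.range_eq_top.mp hrange⟩, fun g v => hkey g v⟩
  · -- second equivalence
    obtain ⟨φ, hφ⟩ := exists_cL_ne hvw
    set e0 : V₂ →ₗ[ℂ] V₂ := cL φ ∘ₗ T ∘ₗ (TensorProduct.mk ℂ V₁ V₂ v₀) with he0
    have he0v : ∀ w, e0 w = cL φ (T (v₀ ⊗ₜ[ℂ] w)) := fun w => rfl
    have hkey : ∀ g w, e0 (σ₂ g w)
        = (lam0 (Matrix.GeneralLinearGroup.det g) : ℂ) • σ₂ g (e0 w) := by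
      intro g w
      rw [he0v, he0v, ← hπ2 g v₀ w, hsemi2, _root_.map_smul, hcLπ]
    have he0ne : e0 ≠ 0 := by
      intro h0
      apply hφ
      rw [← he0v w₀, h0]
      simp
    have hker : LinearMap.ker e0 = ⊥ := by
      have hsub : IsSubrep σ₂ (LinearMap.ker e0) := by
        intro g v hv
        rw [LinearMap.mem_ker] at hv ⊢
        rw [hkey, hv, _root_.map_zero, smul_zero]
      rcases h₂.2 _ hsub with h | h
      · exact h
      · exact absurd (LinearMap.ker_eq_top.mp h) he0ne
    have hrange : LinearMap.range e0 = ⊤ := by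
      have hsub : IsSubrep σ₂ (LinearMap.range e0) := by
        rintro g _ ⟨v, rfl⟩
        refine ⟨(lam0 (Matrix.GeneralLinearGroup.det g) : ℂ)⁻¹ • σ₂ g v, ?_⟩
        rw [_root_.map_smul, hkey, smul_smul, inv_mul_cancel₀ (hlam_ne _), one_smul]
      rcases h₂.2 _ hsub with h | h
      · exact absurd (LinearMap.range_eq_bot.mp h) he0ne
      · exact h
    exact ⟨LinearEquiv.ofBijective e0
      ⟨LinearMap.ker_eq_bot.mp hker, LinearMap.range_eq_top.mp hrange⟩, fun g v => hkey g v⟩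
  · -- the decomposition
    set Wp := LinearMap.ker (T - LinearMap.id) with hWpdef
    set Wm := LinearMap.ker (T + LinearMap.id) with hWmdef
    have hmemp : ∀ v, v ∈ Wp ↔ T v = v := by
      intro v
      rw [hWpdef, LinearMap.mem_ker, LinearMap.sub_apply, LinearMap.id_apply, sub_eq_zero]
    have hmemm : ∀ v, v ∈ Wm ↔ T v = -v := by
      intro v
      rw [hWmdef, LinearMap.mem_ker, LinearMap.add_apply, LinearMap.id_apply,
        add_eq_zero_iff_eq_neg]
    have hsubp : IsSubrep ρH Wp := by
      intro p v hv
      rw [hmemp] at hv ⊢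
      show T (π (p : GL (Fin 2) F × GL (Fin 2) F) v) = π (p : GL (Fin 2) F × GL (Fin 2) F) v
      rw [hTH _ p.2, hv]
    have hsubm : IsSubrep ρH Wm := by
      intro p v hv
      rw [hmemm] at hv ⊢
      show T (π (p : GL (Fin 2) F × GL (Fin 2) F) v)
        = -(π (p : GL (Fin 2) F × GL (Fin 2) F) v)
      rw [hTH _ p.2, hv, _root_.map_neg]
    have hinp : ∀ v, (2⁻¹ : ℂ) • (v + T v) ∈ Wp := by
      intro v
      rw [hmemp, _root_.map_smul, _root_.map_add, hT2, add_comm]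
    have hinm : ∀ v, (2⁻¹ : ℂ) • (v - T v) ∈ Wm := by
      intro v
      rw [hmemm, _root_.map_smul, _root_.map_sub, hT2]
      module
    have hcompl : IsCompl Wp Wm := by
      constructor
      · rw [disjoint_iff, Submodule.eq_bot_iff]
        intro v hv
        rw [Submodule.mem_inf] at hv
        have h1 : T v = v := (hmemp v).mp hv.1
        have h2 : T v = -v := (hmemm v).mp hv.2
        have h3 : v = -v := h1.symm.trans h2
        have h4 : (2 : ℂ) • v = 0 := by
          rw [two_smul]; exact add_eq_zero_iff_eq_neg.mpr h3
        simpa using (smul_eq_zero.mp h4).resolve_left (by norm_num)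
      · rw [codisjoint_iff, eq_top_iff]
        rintro v -
        rw [Submodule.mem_sup]
        exact ⟨(2⁻¹ : ℂ) • (v + T v), hinp v, (2⁻¹ : ℂ) • (v - T v), hinm v, by module⟩
    have hswapp : ∀ v ∈ Wp, π g₀ v ∈ Wm := by
      intro v hv
      rw [hmemp] at hv
      rw [hmemm, hTg, hv, neg_one_smul]
    have hswapm : ∀ v ∈ Wm, π g₀ v ∈ Wp := by
      intro v hv
      rw [hmemm] at hv
      rw [hmemp, hTg, hv, _root_.map_neg]
      module
    have hinjr : ∀ (Wx Wy : Submodule ℂ (V₁ ⊗[ℂ] V₂))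
        (hsw : ∀ v ∈ Wx, (π g₀ : V₁ ⊗[ℂ] V₂ →ₗ[ℂ] V₁ ⊗[ℂ] V₂) v ∈ Wy),
        Function.Injective ((π g₀ : V₁ ⊗[ℂ] V₂ →ₗ[ℂ] V₁ ⊗[ℂ] V₂).restrict hsw) := by
      intro Wx Wy hsw x y hxy
      apply Subtype.ext
      apply rep_inj π g₀
      have h20 := congrArg Subtype.val hxy
      simpa [LinearMap.restrict_apply] using h20
    have hrank : Module.finrank ℂ Wp = Module.finrank ℂ Wm :=
      le_antisymm (LinearMap.finrank_le_finrank_of_injective (hinjr Wp Wm hswapp))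
        (LinearMap.finrank_le_finrank_of_injective (hinjr Wm Wp hswapm))
    have hWpne : Wp ≠ ⊥ := by
      intro h0
      obtain ⟨v, hv⟩ := exists_ne (0 : V₁ ⊗[ℂ] V₂)
      apply hv
      have hTv : ∀ x, T x = -x := by
        intro x
        have := hinp x
        rw [h0, Submodule.mem_bot, smul_eq_zero] at this
        have h5 : x + T x = 0 := this.resolve_left (by norm_num)
        exact eq_neg_of_add_eq_zero_right h5
      have h6 : T (π g₀ v) = -(π g₀ v) := hTv _
      have h7 : T (π g₀ v) = π g₀ v := by
        rw [hTg, hTv, _root_.map_neg]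
        module
      have h8 : π g₀ v = 0 := by
        have h9 : π g₀ v = -(π g₀ v) := h7.symm.trans h6
        have h10 : (2 : ℂ) • π g₀ v = 0 := by
          rw [two_smul]; exact add_eq_zero_iff_eq_neg.mpr h9
        simpa using (smul_eq_zero.mp h10).resolve_left (by norm_num)
      calc v = π g₀⁻¹ (π g₀ v) := by rw [hππ, inv_mul_cancel, _root_.map_one]; rfl
      _ = 0 := by rw [h8, _root_.map_zero]
    have hWmne : Wm ≠ ⊥ := by
      intro h0
      obtain ⟨v, hv⟩ := exists_ne (0 : V₁ ⊗[ℂ] V₂)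
      apply hv
      have hTv : ∀ x, T x = x := by
        intro x
        have := hinm x
        rw [h0, Submodule.mem_bot, smul_eq_zero] at this
        have h5 : x - T x = 0 := this.resolve_left (by norm_num)
        exact (sub_eq_zero.mp h5).symm
      have h6 : T (π g₀ v) = π g₀ v := hTv _
      have h7 : T (π g₀ v) = -(π g₀ v) := by
        rw [hTg, hTv, neg_one_smul]
      have h8 : π g₀ v = 0 := by
        have h9 : π g₀ v = -(π g₀ v) := h6.symm.trans h7
        have h10 : (2 : ℂ) • π g₀ v = 0 := by
          rw [two_smul]; exact add_eq_zero_iff_eq_neg.mpr h9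
        simpa using (smul_eq_zero.mp h10).resolve_left (by norm_num)
      calc v = π g₀⁻¹ (π g₀ v) := by rw [hππ, inv_mul_cancel, _root_.map_one]; rfl
      _ = 0 := by rw [h8, _root_.map_zero]
    have hmax : ∀ (ε : ℂ) (U : Submodule ℂ (V₁ ⊗[ℂ] V₂)), IsSubrep ρH U → U ≠ ⊥ →
        (∀ v ∈ U, T v = ε • v) → ∀ w, T w = ε • w → w ∈ U := by
      intro ε U hUsub hUne hUT w hw
      obtain ⟨QU, hQUc, hQUfix, hQUmem⟩ := maschke ρH hUsub
      have hQUH : ∀ p ∈ eqDetSubgroup F, ∀ v, QU (π p v) = π p (QU v) := by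
        intro p hp v
        have h9 := congrArg (fun f : V₁ ⊗[ℂ] V₂ →ₗ[ℂ] V₁ ⊗[ℂ] V₂ => f v) (hQUc ⟨p, hp⟩)
        simp only [LinearMap.comp_apply] at h9
        exact h9
      obtain ⟨αU, TU, hTUH, hTUg, hQUdec⟩ := hprocess QU hQUH
      have hcomm : ∃ β : ℂ, TU ∘ₗ T = β • LinearMap.id := by
        apply hscalar
        · intro p hp v
          simp only [LinearMap.comp_apply]
          rw [hTH _ hp, hTUH _ hp]
        · intro v
          simp only [LinearMap.comp_apply]
          rw [hTg, _root_.map_smul TU, hTUg, smul_smul]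
          norm_num
      obtain ⟨β, hβ⟩ := hcomm
      have hTUv : ∀ v, TU v = β • T v := by
        intro v
        have h10 := congrArg (fun f : V₁ ⊗[ℂ] V₂ →ₗ[ℂ] V₁ ⊗[ℂ] V₂ => f (T v)) hβ
        simp only [LinearMap.comp_apply, LinearMap.smul_apply, LinearMap.id_apply] at h10
        rw [hT2] at h10
        exact h10
      obtain ⟨v₁, hv₁U, hv₁ne⟩ := Submodule.exists_mem_ne_zero_of_ne_bot hUne
      have heq : αU + β * ε = 1 := by
        have h11 : QU v₁ = v₁ := hQUfix _ hv₁U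
        have h12 : QU v₁ = (αU + β * ε) • v₁ := by
          rw [hQUdec v₁, hTUv v₁, hUT v₁ hv₁U, smul_smul, ← add_smul]
        rw [h11] at h12
        have h13 : (αU + β * ε - 1) • v₁ = 0 := by
          rw [sub_smul, one_smul, ← h12, sub_self]
        rcases smul_eq_zero.mp h13 with h | h
        · linear_combination h
        · exact absurd h hv₁ne
      have h14 : QU w = w := by
        rw [hQUdec w, hTUv w, hw, smul_smul, ← add_smul, heq, one_smul]
      rw [← h14]
      exact hQUmem w
    refine ⟨Wp, Wm, hsubp, hsubm, hcompl, hrank, hWpne, hWmne, ?_, ?_⟩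
    · intro U hU hle
      by_cases hUb : U = ⊥
      · exact Or.inl hUb
      right
      refine le_antisymm hle ?_
      intro w hwp
      exact hmax 1 U hU hUb (fun v hv => by rw [one_smul]; exact (hmemp v).mp (hle hv)) w
        (by rw [one_smul]; exact (hmemp w).mp hwp)
    · intro U hU hle
      by_cases hUb : U = ⊥
      · exact Or.inl hUb
      right
      refine le_antisymm hle ?_
      intro w hwp
      exact hmax (-1) U hU hUb (fun v hv => by rw [neg_one_smul]; exact (hmemm v).mp (hle hv)) w
        (by rw [neg_one_smul]; exact (hmemm w).mp hwp)
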